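/- Let {f_k}_{k∈ℕ} be a countable family of C¹ functions f_k : ℝⁿ → ℝ whose gradients {Df_k} are locally uniformly bounded and equicontinuous, and suppose F(x) = sup_k f_k(x) is finite for all x. Then F is locally Lipschitz and directionally differentiable at every point (all one-sided directional derivatives exist). -/

import Mathlib

open Filter Topology Metric

/-- Comparison of two countable suprema of reals. -/
lemma ciSup_le_ciSup_add {u v : ℕ → ℝ} (hv : BddAbove (Set.range v)) (c : ℝ)
    (h : ∀ k, u k ≤ v k + c) (hu : BddAbove (Set.range u)) :
    (⨆ k, u k) ≤ (⨆ k, v k) + c := by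
  refine ciSup_le fun k => (h k).trans (add_le_add_left (le_ciSup hv k) c)

/-- If `{f k}` is a countable family of `C¹` functions whose derivatives are locally
uniformly bounded and equicontinuous, and `F = sup_k f k` is (pointwise) finite, then
`F` is locally Lipschitz and all one-sided directional derivatives of `F` exist. -/
theorem pointwise_sup_directionally_differentiable
    (n : ℕ) (f : ℕ → EuclideanSpace ℝ (Fin n) → ℝ)
    (hC1 : ∀ k, ContDiff ℝ 1 (f k))
    (hbdd : ∀ R : ℝ, 0 < R → ∃ M : ℝ, ∀ k (x : EuclideanSpace ℝ (Fin n)), ‖x‖ ≤ R →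
      ‖fderiv ℝ (f k) x‖ ≤ M)
    (heq : ∀ R : ℝ, 0 < R →
      EquicontinuousOn (fun k => fderiv ℝ (f k)) (closedBall (0 : EuclideanSpace ℝ (Fin n)) R))
    (hfin : ∀ x, BddAbove (Set.range fun k => f k x)) :
    LocallyLipschitz (fun x => ⨆ k, f k x) ∧
    ∀ (x θ : EuclideanSpace ℝ (Fin n)), ‖θ‖ = 1 → ∃ d : ℝ,
      Tendsto (fun t : ℝ => ((⨆ k, f k (x + t • θ)) - ⨆ k, f k x) / t)
        (𝓝[>] (0 : ℝ)) (𝓝 d) := by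
  have hdiff : ∀ k, Differentiable ℝ (f k) := fun k => (hC1 k).differentiable one_ne_zero
  constructor
  · -- Locally Lipschitz
    intro x
    set R : ℝ := ‖x‖ + 2 with hRdef
    have hR : 0 < R := by positivity
    obtain ⟨M₀, hM₀⟩ := hbdd R hR
    set M : ℝ := max M₀ 0 with hMdef
    have hM0 : 0 ≤ M := le_max_right _ _
    refine ⟨M.toNNReal, ball x 1, ball_mem_nhds x one_pos, ?_⟩
    have hMnorm : ∀ k, ∀ y ∈ ball x 1, ‖fderiv ℝ (f k) y‖ ≤ M := by
      intro k y hy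
      refine le_trans (hM₀ k y ?_) (le_max_left _ _)
      have : ‖y - x‖ < 1 := by simpa [dist_eq_norm] using hy
      calc ‖y‖ = ‖x + (y - x)‖ := by rw [add_sub_cancel]
        _ ≤ ‖x‖ + ‖y - x‖ := norm_add_le _ _
        _ ≤ R := by rw [hRdef]; linarith
    have hlip : ∀ k, LipschitzOnWith M.toNNReal (f k) (ball x 1) := by
      intro k
      refine (convex_ball x 1).lipschitzOnWith_of_nnnorm_fderiv_le
        (fun y _ => (hdiff k).differentiableAt) (fun y hy => ?_)
      rw [← NNReal.coe_le_coe, coe_nnnorm, Real.coe_toNNReal _ hM0]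
      exact hMnorm k y hy
    rw [lipschitzOnWith_iff_dist_le_mul]
    have key : ∀ y ∈ ball x 1, ∀ z ∈ ball x 1,
        (⨆ k, f k y) ≤ (⨆ k, f k z) + M.toNNReal * dist y z := by
      intro y hy z hz
      refine ciSup_le fun k => ?_
      have hd := (hlip k).dist_le_mul y hy z hz
      rw [Real.dist_eq] at hd
      have h1 : f k y - f k z ≤ M.toNNReal * dist y z := (le_abs_self _).trans hd
      have h2 : f k z ≤ ⨆ k, f k z := le_ciSup (hfin z) k
      linarith
    intro y hy z hz
    rw [Real.dist_eq, abs_sub_le_iff]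
    constructor
    · have := key y hy z hz; linarith
    · have := key z hz y hy; rw [dist_comm] at this; linarith
  · -- directional derivatives
    intro x θ hθ
    set R : ℝ := ‖x‖ + 2 with hRdef
    have hR : 0 < R := by positivity
    obtain ⟨M₀, hM₀⟩ := hbdd R hR
    set M : ℝ := max M₀ 0 with hMdef
    have hM0 : 0 ≤ M := le_max_right _ _
    have hxR : ‖x‖ ≤ R := by rw [hRdef]; linarith
    set a : ℕ → ℝ := fun k => fderiv ℝ (f k) x θ with hadef
    have ha : ∀ k, |a k| ≤ M := by
      intro k
      calc |a k| = ‖fderiv ℝ (f k) x θ‖ := rfl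
        _ ≤ ‖fderiv ℝ (f k) x‖ * ‖θ‖ := (fderiv ℝ (f k) x).le_opNorm θ
        _ = ‖fderiv ℝ (f k) x‖ := by rw [hθ, mul_one]
        _ ≤ M := le_trans (hM₀ k x hxR) (le_max_left _ _)
    obtain ⟨B, hB⟩ := hfin x
    have hBk : ∀ k, f k x ≤ B := fun k => hB (Set.mem_range_self k)
    set φ : ℝ → ℝ := fun t => ⨆ k, (f k x + t * a k) with hφdef
    have hφbdd : ∀ t : ℝ, BddAbove (Set.range fun k => f k x + t * a k) := by
      intro t
      refine ⟨B + |t| * M, ?_⟩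
      rintro _ ⟨k, rfl⟩
      show f k x + t * a k ≤ B + |t| * M
      have h1 : t * a k ≤ |t| * M := by
        calc t * a k ≤ |t * a k| := le_abs_self _
          _ = |t| * |a k| := abs_mul _ _
          _ ≤ |t| * M := by
            exact mul_le_mul_of_nonneg_left (ha k) (abs_nonneg t)
      have := hBk k; linarith
    have hφ0 : φ 0 = ⨆ k, f k x := by simp [hφdef]
    have hle_φ : ∀ t k, f k x + t * a k ≤ φ t := fun t k => le_ciSup (hφbdd t) k
    -- slope function
    set s : ℝ → ℝ := fun t => (φ t - φ 0) / t with hsdef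
    have hmono : MonotoneOn s (Set.Ioi (0 : ℝ)) := by
      intro t₁ ht₁ t₂ ht₂ h12
      simp only [Set.mem_Ioi] at ht₁ ht₂
      set lam : ℝ := t₁ / t₂ with hlamdef
      have hlam0 : 0 ≤ lam := div_nonneg ht₁.le ht₂.le
      have hlam1 : lam ≤ 1 := div_le_one_of_le₀ h12 ht₂.le
      have hlt : lam * t₂ = t₁ := div_mul_cancel₀ t₁ ht₂.ne'
      have hφt₁ : φ t₁ ≤ (1 - lam) * φ 0 + lam * φ t₂ := by
        refine ciSup_le fun k => ?_
        have e1 : f k x + t₁ * a k = (1 - lam) * (f k x) + lam * (f k x + t₂ * a k) := by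
          rw [← hlt]; ring
        rw [e1]
        have h1 : f k x ≤ φ 0 := by rw [hφ0]; exact le_ciSup (hfin x) k
        have h2 : f k x + t₂ * a k ≤ φ t₂ := hle_φ t₂ k
        have := mul_le_mul_of_nonneg_left h1 (by linarith : (0:ℝ) ≤ 1 - lam)
        have := mul_le_mul_of_nonneg_left h2 hlam0
        linarith
      have e2 : lam * (φ t₂ - φ 0) / t₁ = (φ t₂ - φ 0) / t₂ := by
        rw [hlamdef]; field_simp
      have hnum : φ t₁ - φ 0 ≤ lam * (φ t₂ - φ 0) := by linarith
      have : s t₁ ≤ lam * (φ t₂ - φ 0) / t₁ := by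
        show (φ t₁ - φ 0) / t₁ ≤ lam * (φ t₂ - φ 0) / t₁
        gcongr
      calc s t₁ ≤ lam * (φ t₂ - φ 0) / t₁ := this
        _ = s t₂ := by rw [e2]
    have hbelow : ∀ t ∈ Set.Ioi (0:ℝ), -M ≤ s t := by
      intro t ht
      simp only [Set.mem_Ioi] at ht
      have hφ0le : φ 0 ≤ φ t + t * M := by
        rw [hφ0]
        refine ciSup_le fun k => ?_
        have h1 : -(t * M) ≤ t * a k := by
          have : |t * a k| ≤ t * M := by
            rw [abs_mul, abs_of_pos ht]
            exact mul_le_mul_of_nonneg_left (ha k) ht.le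
          linarith [neg_abs_le (t * a k)]
        have := hle_φ t k
        linarith
      rw [hsdef, le_div_iff₀ ht]
      linarith
    have hbddB : BddBelow (s '' Set.Ioi (0:ℝ)) := by
      refine ⟨-M, ?_⟩
      rintro _ ⟨t, ht, rfl⟩
      exact hbelow t ht
    refine ⟨sInf (s '' Set.Ioi 0), ?_⟩
    have hs_lim : Tendsto s (𝓝[>] (0:ℝ)) (𝓝 (sInf (s '' Set.Ioi 0))) :=
      hmono.tendsto_nhdsGT hbddB
    -- the error term
    have key : ∀ ε : ℝ, 0 < ε → ∀ᶠ t in 𝓝[>] (0:ℝ),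
        |((⨆ k, f k (x + t • θ)) - ⨆ k, f k x) / t - s t| ≤ ε := by
      intro ε hε
      have hxball : x ∈ closedBall (0 : EuclideanSpace ℝ (Fin n)) R := by
        simpa [dist_eq_norm] using hxR
      have hequi := heq R hR x hxball
      have hU := dist_mem_uniformity (α := EuclideanSpace ℝ (Fin n) →L[ℝ] ℝ) hε
      have hnhds : closedBall (0 : EuclideanSpace ℝ (Fin n)) R ∈ 𝓝 x := by
        refine Filter.mem_of_superset (isOpen_ball.mem_nhds ?_) ball_subset_closedBall
        simpa [dist_eq_norm] using (by rw [hRdef]; linarith : ‖x‖ < R)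
      have hev := hequi _ hU
      rw [nhdsWithin_eq_nhds.2 hnhds] at hev
      rw [Metric.eventually_nhds_iff] at hev
      obtain ⟨δ, hδ, hδev⟩ := hev
      set r : ℝ := min δ 1 with hrdef
      have hr : 0 < r := lt_min hδ one_pos
      have hderiv_close : ∀ y ∈ ball x r, ∀ k,
          ‖fderiv ℝ (f k) y - fderiv ℝ (f k) x‖ ≤ ε := by
        intro y hy k
        have hyδ : dist y x < δ := lt_of_lt_of_le (mem_ball.1 hy) (min_le_left _ _)
        have h2 := hδev hyδ k
        simp only [Set.mem_setOf_eq] at h2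
        rw [dist_eq_norm] at h2
        rw [← norm_neg]
        simpa [neg_sub] using h2.le
      filter_upwards [Ioo_mem_nhdsGT_of_mem (Set.mem_Ico.2 ⟨le_rfl, hr⟩)] with t ht
      obtain ⟨ht0, htr⟩ := ht
      -- Taylor bound for each k
      have htaylor : ∀ k, |f k (x + t • θ) - (f k x + t * a k)| ≤ ε * t := by
        intro k
        have hmem : x + t • θ ∈ ball x r := by
          rw [mem_ball, dist_eq_norm]
          simp only [add_sub_cancel_left]
          rw [norm_smul, hθ, mul_one, Real.norm_eq_abs, abs_of_pos ht0]
          exact htr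
        have hx_mem : x ∈ ball x r := mem_ball_self hr
        have := (convex_ball x r).norm_image_sub_le_of_norm_fderiv_le'
          (f := f k) (φ := fderiv ℝ (f k) x)
          (fun y _ => (hdiff k).differentiableAt)
          (fun y hy => hderiv_close y hy k) hx_mem hmem
        have e : fderiv ℝ (f k) x (x + t • θ - x) = t * a k := by
          simp [hadef, smul_eq_mul]
        rw [e] at this
        have enorm : ‖x + t • θ - x‖ = t := by
          simp only [add_sub_cancel_left]
          rw [norm_smul, hθ, mul_one, Real.norm_eq_abs, abs_of_pos ht0]
        rw [enorm] at this
        calc |f k (x + t • θ) - (f k x + t * a k)|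
            = ‖f k (x + t • θ) - f k x - t * a k‖ := by rw [Real.norm_eq_abs]; ring_nf
          _ ≤ ε * t := this
      -- compare the two suprema
      have hsup1 : (⨆ k, f k (x + t • θ)) ≤ φ t + ε * t := by
        refine ciSup_le_ciSup_add (hφbdd t) (ε * t) (fun k => ?_) (hfin _)
        have := htaylor k
        have := abs_le.1 this
        linarith [this.2]
      have hsup2 : φ t ≤ (⨆ k, f k (x + t • θ)) + ε * t := by
        refine ciSup_le_ciSup_add (hfin _) (ε * t) (fun k => ?_) (hφbdd t)
        have := abs_le.1 (htaylor k)
        linarith [this.1]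
      have habs : |(⨆ k, f k (x + t • θ)) - φ t| ≤ ε * t := by
        rw [abs_le]; constructor <;> linarith
      have e3 : ((⨆ k, f k (x + t • θ)) - ⨆ k, f k x) / t - s t
          = ((⨆ k, f k (x + t • θ)) - φ t) / t := by
        rw [hsdef, hφ0]; field_simp; ring
      rw [e3, abs_div, abs_of_pos ht0, div_le_iff₀ ht0]
      calc |(⨆ k, f k (x + t • θ)) - φ t| ≤ ε * t := habs
        _ = ε * t := rfl
    -- combine
    have hdiff_lim : Tendsto (fun t => ((⨆ k, f k (x + t • θ)) - ⨆ k, f k x) / t - s t)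
        (𝓝[>] (0:ℝ)) (𝓝 0) := by
      rw [NormedAddCommGroup.tendsto_nhds_zero]
      intro ε hε
      filter_upwards [key (ε / 2) (by positivity)] with t ht
      rw [Real.norm_eq_abs]
      linarith
    have := hs_lim.add hdiff_lim
    rw [add_zero] at this
    refine this.congr fun t => by ring
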